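/- Let d ≥ 1, β_1, β_2 ∈ (0,1), and p, p_1, p_2 ∈ [1,∞] with 1/p = 1/p_1 + 1/p_2, and let ω be a standard mollifier on ℝ^d. There is a constant C, depending only on d, such that for all measurable g_1, g_2 : T^d → ℝ with g_1 ∈ L^{p_1}(T^d), g_2 ∈ L^{p_2}(T^d), and all 0 < ε ≤ δ, one has ‖(g_1 g_2) ⋆ ω_ε − (g_1 ⋆ ω_ε)(g_2 ⋆ ω_ε)‖_{L^p(T^d)} ≤ C ε^{β_1+β_2} ‖ω‖_{L^{p/(p−1)}} ‖g_1‖_{V_δ^{β_1,p_1}(T^d)} ‖g_2‖_{V_δ^{β_2,p_2}(T^d)}. -/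

import Mathlib

open MeasureTheory Set Filter ENNReal

noncomputable section

abbrev Ed (d : ℕ) := EuclideanSpace ℝ (Fin d)

def unitCube (d : ℕ) : Set (Ed d) := {x | ∀ i, x i ∈ Set.Ico (0:ℝ) 1}

def torusMeasure (d : ℕ) : Measure (Ed d) := (volume : Measure (Ed d)).restrict (unitCube d)

def intVec {d : ℕ} (k : Fin d → ℤ) : Ed d := WithLp.toLp 2 (fun i => (k i : ℝ))

def PeriodicF {d : ℕ} {F : Type*} (f : Ed d → F) : Prop :=
  ∀ (x : Ed d) (k : Fin d → ℤ), f (x + intVec k) = f x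

def tLp (d : ℕ) (p : ℝ≥0∞) {F : Type*} [NormedAddCommGroup F] (f : Ed d → F) : ℝ≥0∞ :=
  eLpNorm f p (torusMeasure d)

def Vnorm (d : ℕ) (β δ : ℝ) (p : ℝ≥0∞) {F : Type*} [NormedAddCommGroup F] (f : Ed d → F) : ℝ≥0∞ :=
  ⨆ (h : Ed d) (_ : 0 < ‖h‖ ∧ ‖h‖ < δ),
    ENNReal.ofReal (‖h‖ ^ (-β)) * tLp d p (fun x => f (x + h) - f x)

structure IsMollifier (d : ℕ) (ω : Ed d → ℝ) : Prop where
  smooth : ContDiff ℝ (⊤ : ℕ∞) ω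
  nonneg : ∀ x, 0 ≤ ω x
  support_subset : Function.support ω ⊆ Metric.closedBall 0 1
  integral_one : ∫ x, ω x = 1

def mollKer (d : ℕ) (ω : Ed d → ℝ) (ε : ℝ) (x : Ed d) : ℝ := ε⁻¹ ^ d * ω (ε⁻¹ • x)

def moll (d : ℕ) (ω : Ed d → ℝ) (ε : ℝ) {F : Type*} [NormedAddCommGroup F] [NormedSpace ℝ F]
    (f : Ed d → F) (x : Ed d) : F := ∫ y, mollKer d ω ε y • f (x - y)

def pd (d : ℕ) {F : Type*} [NormedAddCommGroup F] [NormedSpace ℝ F] (f : Ed d → F) (i : Fin d)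
    (x : Ed d) : F := fderiv ℝ f x (EuclideanSpace.single i 1)

def divg (d : ℕ) (v : Ed d → Ed d) (x : Ed d) : ℝ := ∑ i, pd d v i x i

def stMeasure (d : ℕ) (T : ℝ) : Measure (ℝ × Ed d) :=
  ((volume : Measure ℝ).restrict (Set.Ioo 0 T)).prod (torusMeasure d)

def stLp (d : ℕ) (T : ℝ) (p : ℝ≥0∞) {F : Type*} [NormedAddCommGroup F] (f : ℝ → Ed d → F) : ℝ≥0∞ :=
  eLpNorm (fun q : ℝ × Ed d => f q.1 q.2) p (stMeasure d T)

def LqV (d : ℕ) (T q β δ : ℝ) (p : ℝ≥0∞) {F : Type*} [NormedAddCommGroup F]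
    (f : ℝ → Ed d → F) : ℝ≥0∞ :=
  (∫⁻ t in Set.Ioo 0 T, (Vnorm d β δ p (f t)) ^ q) ^ (1/q)

def LinfV (d : ℕ) (T β δ : ℝ) (p : ℝ≥0∞) {F : Type*} [NormedAddCommGroup F]
    (f : ℝ → Ed d → F) : ℝ≥0∞ :=
  essSup (fun t => Vnorm d β δ p (f t)) ((volume : Measure ℝ).restrict (Set.Ioo 0 T))

end

/-! ### Auxiliary material -/

noncomputable section Aux

open MeasureTheory Set Filter ENNReal

/-! #### Stage 1 : the unit cube as a fundamental domain, shift invariance -/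

section Stage1

variable {d : ℕ}

lemma intVec_add {k l : Fin d → ℤ} : intVec (k + l) = intVec k + intVec l := by
  ext i
  simp only [intVec, PiLp.add_apply, Pi.add_apply]
  push_cast
  ring

lemma intVec_zsmul {n : ℤ} {k : Fin d → ℤ} : intVec (n • k) = n • intVec k := by
  ext i
  simp only [intVec, PiLp.smul_apply, Pi.smul_apply, smul_eq_mul, zsmul_eq_mul]
  push_cast
  ring

/-- the standard basis -/
abbrev stdB (d : ℕ) : Module.Basis (Fin d) ℝ (Ed d) := (EuclideanSpace.basisFun (Fin d) ℝ).toBasis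

lemma unitCube_eq_fd : unitCube d = ZSpan.fundamentalDomain (stdB d) := by
  ext x
  simp [unitCube, ZSpan.mem_fundamentalDomain, OrthonormalBasis.coe_toBasis_repr_apply,
    EuclideanSpace.basisFun_repr]

lemma measurableSet_unitCube : MeasurableSet (unitCube d) := by
  rw [unitCube_eq_fd]; exact ZSpan.fundamentalDomain_measurableSet _

lemma mem_span_iff_intVec {v : Ed d} :
    v ∈ (Submodule.span ℤ (Set.range ⇑(stdB d))).toAddSubgroup → ∃ k, v = intVec k := by
  intro hv
  classical
  let S : Submodule ℤ (Ed d) :=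
  { carrier := {v | ∃ k, v = intVec k}
    add_mem' := by
      rintro a b ⟨k, rfl⟩ ⟨l, rfl⟩
      exact ⟨k + l, by rw [intVec_add]⟩
    zero_mem' := ⟨0, by ext i; simp [intVec]⟩
    smul_mem' := by
      rintro n a ⟨k, rfl⟩
      exact ⟨n • k, by rw [intVec_zsmul]⟩ }
  have hle : Submodule.span ℤ (Set.range ⇑(stdB d)) ≤ S := by
    rw [Submodule.span_le]
    rintro _ ⟨i, rfl⟩
    refine ⟨Pi.single i 1, ?_⟩
    ext j
    by_cases h : j = i <;>
      simp [OrthonormalBasis.coe_toBasis, EuclideanSpace.basisFun_apply,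
        EuclideanSpace.single_apply, intVec, Pi.single_apply, h]
  exact hle hv

lemma lint_shift (G : Ed d → ℝ≥0∞)
    (hper : ∀ (x : Ed d) (k : Fin d → ℤ), G (x + intVec k) = G x) (h : Ed d) :
    ∫⁻ x in unitCube d, G (x + h) = ∫⁻ x in unitCube d, G x := by
  set L := (Submodule.span ℤ (Set.range ⇑(stdB d))).toAddSubgroup with hL
  haveI : Countable ↥L := by
    refine Set.Countable.to_subtype ?_
    have : (L : Set (Ed d)) ⊆ Set.range (intVec (d := d)) := by
      intro v hv
      obtain ⟨k, hk⟩ := mem_span_iff_intVec hv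
      exact ⟨k, hk.symm⟩
    exact (Set.countable_range _).mono this
  have hs : IsAddFundamentalDomain L (unitCube d) volume := by
    rw [unitCube_eq_fd]; exact ZSpan.isAddFundamentalDomain' (stdB d) volume
  have mp : MeasurePreserving (fun x : Ed d => x + h) volume volume :=
    measurePreserving_add_right volume h
  have hemb : MeasurableEmbedding (fun x : Ed d => x + h) :=
    (MeasurableEquiv.addRight h).measurableEmbedding
  have step1 : ∫⁻ x in unitCube d, G (x + h) =
      ∫⁻ y in (fun x : Ed d => x + h) '' unitCube d, G y :=
    mp.setLIntegral_comp_emb hemb G (unitCube d)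
  have hinv : ∀ (g : L) (x : Ed d), G (g +ᵥ x) = G x := by
    rintro g x
    obtain ⟨k, hk⟩ := mem_span_iff_intVec g.2
    have h2 : g +ᵥ x = x + intVec k := by
      show (g : Ed d) + x = x + intVec k
      rw [← hk]; exact add_comm _ _
    rw [h2, hper]
  have ht : IsAddFundamentalDomain L ((fun x : Ed d => x + h) '' unitCube d) volume := by
    have himg : (fun x : Ed d => x + h) '' unitCube d = ⇑(Equiv.addRight h) '' unitCube d := rfl
    rw [himg]
    refine hs.image_of_equiv (Equiv.addRight h) ?_ (Equiv.refl _) ?_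
    · have h1 : Measure.QuasiMeasurePreserving (fun x : Ed d => x + (-h)) volume volume :=
        (measurePreserving_add_right volume (-h)).quasiMeasurePreserving
      have h3 : ⇑(Equiv.addRight h).symm = fun x : Ed d => x + (-h) := by
        ext x; simp [Equiv.addRight_symm]
      rw [h3]; exact h1
    · intro g x
      show (g +ᵥ x) + h = g +ᵥ (x + h)
      show ((g : Ed d) + x) + h = (g : Ed d) + (x + h)
      exact add_assoc _ _ _
  rw [step1, ht.setLIntegral_eq hs G hinv]

end Stage1

/-! #### Stage 2 : basic facts about the torus measure and the mollification kernel -/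

section Stage2
variable {d : ℕ} {ω : Ed d → ℝ} {ε : ℝ}

lemma volume_unitCube : volume (unitCube d) = 1 := by
  have hmp := EuclideanSpace.volume_preserving_symm_measurableEquiv_toLp (Fin d)
  have h1 : unitCube d =
      ((MeasurableEquiv.toLp 2 (Fin d → ℝ)).symm) ⁻¹' (Set.univ.pi fun _ => Set.Ico (0:ℝ) 1) := by
    ext x
    simp [unitCube, Set.mem_pi]
  rw [h1, hmp.measure_preimage
    (MeasurableSet.univ_pi fun _ => measurableSet_Ico).nullMeasurableSet, volume_pi_pi]
  simp [Real.volume_Ico]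

lemma torus_univ : torusMeasure d Set.univ = 1 := by
  rw [torusMeasure, Measure.restrict_apply_univ, volume_unitCube]

instance torus_prob : IsProbabilityMeasure (torusMeasure d) := ⟨torus_univ⟩

variable (hmol : IsMollifier d ω) (hε : 0 < ε)
include hmol hε

lemma mollKer_nonneg (y : Ed d) : 0 ≤ mollKer d ω ε y :=
  mul_nonneg (pow_nonneg (inv_nonneg.2 hε.le) d) (hmol.nonneg _)

omit hε in
lemma mollKer_cont : Continuous (mollKer d ω ε) :=
  continuous_const.mul (hmol.smooth.continuous.comp (continuous_id.const_smul ε⁻¹))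

lemma mollKer_support {y : Ed d} (hy : mollKer d ω ε y ≠ 0) : ‖y‖ ≤ ε := by
  have hω : ω (ε⁻¹ • y) ≠ 0 := by
    intro h0; apply hy; simp [mollKer, h0]
  have h1 := hmol.support_subset hω
  rw [Metric.mem_closedBall, dist_zero_right, norm_smul] at h1
  rw [norm_inv, Real.norm_eq_abs, abs_of_pos hε] at h1
  calc ‖y‖ = ε * (ε⁻¹ * ‖y‖) := by field_simp
  _ ≤ ε * 1 := by gcongr
  _ = ε := mul_one ε

lemma mollKer_hcs : HasCompactSupport (mollKer d ω ε) := by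
  apply HasCompactSupport.of_support_subset_isCompact (isCompact_closedBall (0 : Ed d) ε)
  intro y hy
  exact Metric.mem_closedBall.2 (by rw [dist_zero_right]; exact mollKer_support hmol hε hy)

lemma mollKer_integrable : Integrable (mollKer d ω ε) volume :=
  (mollKer_cont hmol).integrable_of_hasCompactSupport (mollKer_hcs hmol hε)

lemma mollKer_integral : ∫ y, mollKer d ω ε y = 1 := by
  simp only [mollKer]
  rw [MeasureTheory.integral_const_mul]
  rw [MeasureTheory.Measure.integral_comp_smul (μ := (volume : Measure (Ed d))) ω ε⁻¹]
  rw [finrank_euclideanSpace_fin, hmol.integral_one]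
  rw [inv_pow, inv_inv, abs_of_pos (pow_pos hε d)]
  simp only [smul_eq_mul, mul_one]
  field_simp

lemma mollKer_lintegral : ∫⁻ y, ENNReal.ofReal (mollKer d ω ε y) = 1 := by
  rw [← MeasureTheory.ofReal_integral_eq_lintegral_ofReal (mollKer_integrable hmol hε)
    (Filter.Eventually.of_forall fun y => mollKer_nonneg hmol hε y)]
  rw [mollKer_integral hmol hε]
  simp

end Stage2

/-! #### Stage 3 : a Minkowski-type inequality with a uniform bound -/

section Stage3
variable {α β : Type*} [MeasurableSpace α] [MeasurableSpace β]

/-- Minkowski-type inequality with a uniform bound. -/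
lemma lintegral_kernel_bound (μ : Measure α) (ν : Measure β) [IsFiniteMeasure μ] [SigmaFinite ν]
    {q : ℝ} (hq : 1 ≤ q) {κ : β → ℝ≥0∞} (hκ : Measurable κ) (hκ1 : ∫⁻ y, κ y ∂ν = 1)
    {G : α → β → ℝ≥0∞} (hG : Measurable (Function.uncurry G)) {M : ℝ≥0∞}
    (hbd : ∀ᵐ y ∂ν, κ y ≠ 0 → ∫⁻ x, (G x y) ^ q ∂μ ≤ M ^ q) :
    ∫⁻ x, (∫⁻ y, κ y * G x y ∂ν) ^ q ∂μ ≤ M ^ q := by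
  have hq0 : 0 < q := lt_of_lt_of_le one_pos hq
  by_cases hM : M = ∞
  · rw [hM, ENNReal.top_rpow_of_pos hq0]; exact le_top
  have hGx : ∀ x, Measurable fun y => G x y := fun x => hG.comp measurable_prodMk_left
  have hGy : ∀ y, Measurable fun x => G x y := fun y => hG.comp measurable_prodMk_right
  set Gn : ℕ → α → β → ℝ≥0∞ := fun n x y => G x y ⊓ (n : ℝ≥0∞) with hGn
  have hGn_unc : ∀ n, Measurable (Function.uncurry (Gn n)) := fun n => hG.inf measurable_const
  have hGn_x : ∀ n x, Measurable fun y => Gn n x y := fun n x => (hGx x).inf measurable_const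
  have hGn_y : ∀ n y, Measurable fun x => Gn n x y := fun n y => (hGy y).inf measurable_const
  have hGn_mono : ∀ x y, Monotone fun n => Gn n x y := fun x y n m hnm =>
    inf_le_inf le_rfl (by exact_mod_cast Nat.cast_le.2 hnm)
  have hGn_sup : ∀ x y, (⨆ n, Gn n x y) = G x y := by
    intro x y
    rw [hGn]
    simp only
    rw [← inf_iSup_eq, ENNReal.iSup_natCast, inf_top_eq]
  set In : ℕ → α → ℝ≥0∞ := fun n x => ∫⁻ y, κ y * Gn n x y ∂ν with hIn
  have hIn_meas : ∀ n, Measurable (In n) := by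
    intro n
    apply Measurable.lintegral_prod_right (f := fun x y => κ y * Gn n x y)
    exact (hκ.comp measurable_snd).mul (hGn_unc n)
  have hIn_le : ∀ n x, In n x ≤ (n : ℝ≥0∞) := by
    intro n x
    calc In n x ≤ ∫⁻ y, κ y * n ∂ν := lintegral_mono fun y => mul_le_mul_right inf_le_right _
    _ = (∫⁻ y, κ y ∂ν) * n := lintegral_mul_const _ hκ
    _ = n := by rw [hκ1, one_mul]
  have key : ∀ n, ∫⁻ x, (In n x) ^ q ∂μ ≤ M ^ q := by
    intro n
    have hGn_bd : ∀ᵐ y ∂ν, κ y ≠ 0 → ∫⁻ x, (Gn n x y) ^ q ∂μ ≤ M ^ q := by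
      filter_upwards [hbd] with y hy hκy
      exact le_trans (lintegral_mono fun x => ENNReal.rpow_le_rpow inf_le_left hq0.le) (hy hκy)
    rcases eq_or_lt_of_le hq with hq1 | hq1
    · -- q = 1
      subst hq1
      simp only [ENNReal.rpow_one] at hGn_bd ⊢
      rw [hIn]
      simp only
      rw [lintegral_lintegral_swap (((hκ.comp measurable_snd).mul (hGn_unc n)).aemeasurable)]
      calc ∫⁻ y, ∫⁻ x, κ y * Gn n x y ∂μ ∂ν
          = ∫⁻ y, κ y * ∫⁻ x, Gn n x y ∂μ ∂ν :=
            lintegral_congr fun y => lintegral_const_mul _ (hGn_y n y)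
        _ ≤ ∫⁻ y, κ y * M ∂ν := by
            refine lintegral_mono_ae ?_
            filter_upwards [hGn_bd] with y hy
            rcases eq_or_ne (κ y) 0 with h0 | h0
            · simp [h0]
            · exact mul_le_mul_right (hy h0) _
        _ = M := by rw [lintegral_mul_const _ hκ, hκ1, one_mul]
    · -- q > 1
      set A := ∫⁻ x, (In n x) ^ q ∂μ with hA
      have hAfin : A < ∞ := by
        calc A ≤ ∫⁻ _, ((n : ℝ≥0∞)) ^ q ∂μ :=
          lintegral_mono fun x => ENNReal.rpow_le_rpow (hIn_le n x) hq0.le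
        _ = ((n : ℝ≥0∞)) ^ q * μ Set.univ := by rw [lintegral_const]
        _ < ∞ := ENNReal.mul_lt_top
            (ENNReal.rpow_lt_top_of_nonneg hq0.le (ENNReal.natCast_ne_top n)) (measure_lt_top μ _)
      rcases eq_or_ne A 0 with hA0 | hA0
      · rw [hA0]; exact zero_le
      set r := q.conjExponent with hr
      have hconj : r.HolderConjugate q := (Real.HolderConjugate.conjExponent hq1).symm
      have hr1 : 1 < r := hconj.lt
      have hq1' : q - 1 ≠ 0 := sub_ne_zero.2 (ne_of_gt hq1)
      have hqr : (q - 1) * r = q := by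
        rw [hr, Real.conjExponent]
        field_simp
      have hImeas : Measurable fun x => (In n x) ^ (q - 1) :=
        (ENNReal.continuous_rpow_const.measurable).comp (hIn_meas n)
      have main : A ≤ A ^ (1/r) * M := by
        have expand : A = ∫⁻ y, κ y * ∫⁻ x, (In n x) ^ (q-1) * Gn n x y ∂μ ∂ν := by
          rw [hA]
          have swap_meas : Measurable (fun p : α × β =>
              (In n p.1) ^ (q-1) * (κ p.2 * Gn n p.1 p.2)) :=
            (hImeas.comp measurable_fst).mul ((hκ.comp measurable_snd).mul (hGn_unc n))
          calc ∫⁻ x, (In n x) ^ q ∂μ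
              = ∫⁻ x, ∫⁻ y, (In n x) ^ (q-1) * (κ y * Gn n x y) ∂ν ∂μ := by
                refine lintegral_congr fun x => ?_
                calc (In n x) ^ q = (In n x) ^ ((q-1) + 1) := by norm_num
                  _ = (In n x) ^ (q-1) * (In n x) ^ (1:ℝ) :=
                      ENNReal.rpow_add_of_nonneg _ _ (by linarith) zero_le_one
                  _ = ∫⁻ y, (In n x) ^ (q-1) * (κ y * Gn n x y) ∂ν := by
                      rw [ENNReal.rpow_one]
                      exact (lintegral_const_mul _ (hκ.mul (hGn_x n x))).symm
            _ = ∫⁻ y, ∫⁻ x, (In n x) ^ (q-1) * (κ y * Gn n x y) ∂μ ∂ν :=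
                lintegral_lintegral_swap swap_meas.aemeasurable
            _ = ∫⁻ y, κ y * ∫⁻ x, (In n x) ^ (q-1) * Gn n x y ∂μ ∂ν := by
                refine lintegral_congr fun y => ?_
                rw [← lintegral_const_mul (f := fun x => (In n x) ^ (q-1) * Gn n x y) _ (hImeas.mul (hGn_y n y))]
                exact lintegral_congr fun x => by ring
        have inner_bd : ∀ᵐ y ∂ν, κ y * ∫⁻ x, (In n x) ^ (q-1) * Gn n x y ∂μ
            ≤ κ y * (A ^ (1/r) * M) := by
          filter_upwards [hGn_bd] with y hy
          rcases eq_or_ne (κ y) 0 with h0 | h0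
          · simp [h0]
          refine mul_le_mul_right ?_ _
          calc ∫⁻ x, (In n x) ^ (q-1) * Gn n x y ∂μ
              ≤ (∫⁻ x, ((In n x) ^ (q-1)) ^ r ∂μ) ^ (1/r) * (∫⁻ x, (Gn n x y) ^ q ∂μ) ^ (1/q) :=
                ENNReal.lintegral_mul_le_Lp_mul_Lq μ hconj hImeas.aemeasurable
                  (hGn_y n y).aemeasurable
            _ ≤ A ^ (1/r) * M := by
                refine mul_le_mul' (le_of_eq ?_) ?_
                · congr 1
                  refine lintegral_congr fun x => ?_
                  rw [← ENNReal.rpow_mul, hqr]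
                · calc (∫⁻ x, (Gn n x y) ^ q ∂μ) ^ (1/q) ≤ (M ^ q) ^ (1/q) :=
                      ENNReal.rpow_le_rpow (hy h0) (by positivity)
                  _ = M := by
                      rw [← ENNReal.rpow_mul, mul_one_div, div_self hq0.ne', ENNReal.rpow_one]
        calc A = ∫⁻ y, κ y * ∫⁻ x, (In n x) ^ (q-1) * Gn n x y ∂μ ∂ν := expand
          _ ≤ ∫⁻ y, κ y * (A ^ (1/r) * M) ∂ν := lintegral_mono_ae inner_bd
          _ = A ^ (1/r) * M := by rw [lintegral_mul_const _ hκ, hκ1, one_mul]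
      have hsum : 1/r + 1/q = (1:ℝ) := by
        rw [one_div, one_div]; exact hconj.inv_add_inv_eq_one
      have hsplit : A = A ^ (1/r) * A ^ (1/q) := by
        rw [← ENNReal.rpow_add_of_nonneg (1/r) (1/q) (by positivity) (by positivity), hsum,
          ENNReal.rpow_one]
      have hfac0 : A ^ (1/r) ≠ 0 := by
        intro h
        rcases ENNReal.rpow_eq_zero_iff.mp h with ⟨h1, _⟩ | ⟨_, h2⟩
        · exact hA0 h1
        · exact absurd h2 (not_lt.mpr (by positivity))
      have hfactop : A ^ (1/r) ≠ ∞ := ENNReal.rpow_ne_top_of_nonneg (by positivity) hAfin.ne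
      have hAq : A ^ (1/q) ≤ M := by
        have main' : A ^ (1/r) * A ^ (1/q) ≤ A ^ (1/r) * M :=
          le_trans (le_of_eq hsplit.symm) main
        exact (ENNReal.mul_le_mul_iff_right hfac0 hfactop).mp main'
      calc A = (A ^ (1/q)) ^ q := by
            rw [← ENNReal.rpow_mul, one_div_mul_cancel hq0.ne', ENNReal.rpow_one]
        _ ≤ M ^ q := ENNReal.rpow_le_rpow hAq hq0.le
  have conv : ∫⁻ x, (∫⁻ y, κ y * G x y ∂ν) ^ q ∂μ = ⨆ n, ∫⁻ x, (In n x) ^ q ∂μ := by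
    have inner_sup : ∀ x, (∫⁻ y, κ y * G x y ∂ν) = ⨆ n, In n x := by
      intro x
      rw [hIn]
      simp only
      rw [← lintegral_iSup (f := fun n y => κ y * Gn n x y) (fun n => hκ.mul (hGn_x n x))
        (fun n m hnm y => mul_le_mul_right (hGn_mono x y hnm) _)]
      refine lintegral_congr fun y => ?_
      rw [← hGn_sup x y, ENNReal.mul_iSup]
    have outer : ∀ x, (∫⁻ y, κ y * G x y ∂ν) ^ q = ⨆ n, (In n x) ^ q := by
      intro x
      rw [inner_sup x]
      refine Monotone.map_iSup_of_continuousAt (f := fun a : ℝ≥0∞ => a ^ q)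
        (g := fun n => In n x) ?_ ?_ ?_
      · exact ENNReal.continuous_rpow_const.continuousAt
      · exact fun a b hab => ENNReal.rpow_le_rpow hab hq0.le
      · show (0:ℝ≥0∞) ^ q = 0
        exact ENNReal.zero_rpow_of_pos hq0
    calc ∫⁻ x, (∫⁻ y, κ y * G x y ∂ν) ^ q ∂μ = ∫⁻ x, ⨆ n, (In n x) ^ q ∂μ :=
          lintegral_congr outer
      _ = ⨆ n, ∫⁻ x, (In n x) ^ q ∂μ := by
          refine lintegral_iSup (fun n => (ENNReal.continuous_rpow_const.measurable).comp
            (hIn_meas n)) ?_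
          intro n m hnm x
          refine ENNReal.rpow_le_rpow ?_ hq0.le
          exact lintegral_mono fun y => mul_le_mul_right (hGn_mono x y hnm) _
  rw [conv]
  exact iSup_le key

end Stage3

/-! #### Stage 4 : eLpNorm version of the kernel bound -/

section Stage4
variable {α β : Type*} [MeasurableSpace α] [MeasurableSpace β]

lemma eLpNorm_kernel_bound (μ : Measure α) (ν : Measure β) [IsFiniteMeasure μ] [SigmaFinite ν]
    {p : ℝ≥0∞} (hp : 1 ≤ p) {K : β → ℝ} (hK : Measurable K) (hK0 : ∀ y, 0 ≤ K y)
    (hK1 : ∫⁻ y, ENNReal.ofReal (K y) ∂ν = 1)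
    {f : α → β → ℝ} (hf : Measurable fun z : α × β => f z.1 z.2) {M : ℝ≥0∞}
    (hbd : ∀ᵐ y ∂ν, K y ≠ 0 → eLpNorm (fun x => f x y) p μ ≤ M) :
    eLpNorm (fun x => ∫ y, K y * f x y ∂ν) p μ ≤ M := by
  have hp0 : p ≠ 0 := fun h => by simp [h] at hp
  set κ : β → ℝ≥0∞ := fun y => ENNReal.ofReal (K y) with hκdef
  have hκ : Measurable κ := ENNReal.measurable_ofReal.comp hK
  have hκ0 : ∀ y, κ y ≠ 0 ↔ K y ≠ 0 := by
    intro y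
    rw [hκdef]
    simp only [ne_eq, ENNReal.ofReal_eq_zero, not_le]
    constructor
    · intro h h0; rw [h0] at h; exact absurd h (lt_irrefl 0)
    · intro h; exact lt_of_le_of_ne (hK0 y) (Ne.symm h)
  have hnnf : Measurable fun z : α × β => (‖f z.1 z.2‖₊ : ℝ≥0∞) :=
    hf.nnnorm.coe_nnreal_ennreal
  have hptw : ∀ x, (‖∫ y, K y * f x y ∂ν‖₊ : ℝ≥0∞) ≤ ∫⁻ y, κ y * ‖f x y‖₊ ∂ν := by
    intro x
    refine le_trans (enorm_integral_le_lintegral_enorm _) (le_of_eq ?_)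
    refine lintegral_congr fun y => ?_
    rw [enorm_mul, Real.enorm_eq_ofReal (hK0 y), enorm_eq_nnnorm]
  by_cases hptop : p = ⊤
  · -- p = ∞
    subst hptop
    simp only [eLpNorm_exponent_top] at hbd ⊢
    have hbd' : ∀ᵐ y ∂ν, K y ≠ 0 → ∀ᵐ x ∂μ, (‖f x y‖₊ : ℝ≥0∞) ≤ M := by
      filter_upwards [hbd] with y hy hKy
      filter_upwards [ENNReal.ae_le_essSup fun x => (‖f x y‖₊ : ℝ≥0∞)] with x hx
      exact le_trans hx (hy hKy)
    have hmeasset : MeasurableSet {z : α × β | K z.2 ≠ 0 → (‖f z.1 z.2‖₊ : ℝ≥0∞) ≤ M} := by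
      have h1 : {z : α × β | K z.2 ≠ 0 → (‖f z.1 z.2‖₊ : ℝ≥0∞) ≤ M}
          = {z : α × β | K z.2 = 0} ∪ {z : α × β | (‖f z.1 z.2‖₊ : ℝ≥0∞) ≤ M} := by
        ext z; simp [imp_iff_not_or]
      rw [h1]
      exact ((hK.comp measurable_snd) (measurableSet_singleton 0)).union
        (measurableSet_le hnnf measurable_const)
    have hbd'' : ∀ᵐ y ∂ν, ∀ᵐ x ∂μ, K y ≠ 0 → (‖f x y‖₊ : ℝ≥0∞) ≤ M := by
      filter_upwards [hbd'] with y hy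
      rcases eq_or_ne (K y) 0 with h0 | h0
      · exact Filter.Eventually.of_forall fun x hne => absurd h0 hne
      · filter_upwards [hy h0] with x hx _
        exact hx
    have hswap : ∀ᵐ x ∂μ, ∀ᵐ y ∂ν, K y ≠ 0 → (‖f x y‖₊ : ℝ≥0∞) ≤ M :=
      (Measure.ae_ae_comm hmeasset).mpr hbd''
    refine essSup_le_of_ae_le M ?_
    filter_upwards [hswap] with x hx
    refine le_trans (hptw x) ?_
    calc ∫⁻ y, κ y * ‖f x y‖₊ ∂ν ≤ ∫⁻ y, κ y * M ∂ν := by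
          refine lintegral_mono_ae ?_
          filter_upwards [hx] with y hy
          rcases eq_or_ne (κ y) 0 with h0 | h0
          · simp [h0]
          · exact mul_le_mul_right (hy ((hκ0 y).mp h0)) _
      _ = M := by rw [lintegral_mul_const _ hκ, hK1, one_mul]
  · -- p < ∞
    set q := p.toReal with hqdef
    have hq : 1 ≤ q := by
      have := ENNReal.toReal_mono hptop hp
      simpa using this
    have hq0 : 0 < q := lt_of_lt_of_le one_pos hq
    have core := lintegral_kernel_bound μ ν hq hκ hK1
      (G := fun x y => (‖f x y‖₊ : ℝ≥0∞)) hnnf (M := M) ?_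
    · rw [eLpNorm_eq_lintegral_rpow_enorm_toReal hp0 hptop]
      have step : ∫⁻ x, (‖∫ y, K y * f x y ∂ν‖₊ : ℝ≥0∞) ^ q ∂μ ≤ M ^ q :=
        le_trans (lintegral_mono fun x => ENNReal.rpow_le_rpow (hptw x) hq0.le) core
      calc (∫⁻ x, (‖∫ y, K y * f x y ∂ν‖₊ : ℝ≥0∞) ^ q ∂μ) ^ (1/q) ≤ (M ^ q) ^ (1/q) :=
            ENNReal.rpow_le_rpow step (by positivity)
        _ = M := by rw [← ENNReal.rpow_mul, mul_one_div, div_self hq0.ne', ENNReal.rpow_one]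
    · filter_upwards [hbd] with y hy hκy
      have h1 := hy ((hκ0 y).mp hκy)
      rw [eLpNorm_eq_lintegral_rpow_enorm_toReal hp0 hptop] at h1
      calc ∫⁻ x, ((‖f x y‖₊ : ℝ≥0∞)) ^ q ∂μ
          = ((∫⁻ x, ((‖f x y‖₊ : ℝ≥0∞)) ^ q ∂μ) ^ (1/q)) ^ q := by
            rw [← ENNReal.rpow_mul, one_div_mul_cancel hq0.ne', ENNReal.rpow_one]
        _ ≤ M ^ q := ENNReal.rpow_le_rpow h1 hq0.le

end Stage4

/-! #### Stage 5 : torus-specific estimates -/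

section Stage5
variable {d : ℕ}

/-- The increment estimate coming from the Besov-type seminorm. -/
lemma tLp_sub_shift_le {g : Ed d → ℝ} {β δ : ℝ} (hβ : 0 ≤ β) {p : ℝ≥0∞} {y : Ed d}
    (hy0 : 0 < ‖y‖) (hyδ : ‖y‖ < δ) :
    eLpNorm (fun x => g (x - y) - g x) p (torusMeasure d)
      ≤ ENNReal.ofReal (‖y‖ ^ β) * Vnorm d β δ p g := by
  have hfe : (fun x : Ed d => g (x - y) - g x) = fun x => g (x + (-y)) - g x := by
    funext x; rw [sub_eq_add_neg x y]
  have hc : 0 < ‖(-y)‖ ∧ ‖(-y)‖ < δ := by rw [norm_neg]; exact ⟨hy0, hyδ⟩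
  have h1 : ENNReal.ofReal (‖y‖ ^ (-β)) * tLp d p (fun x => g (x + (-y)) - g x)
      ≤ Vnorm d β δ p g := by
    have h2 := le_iSup₂ (f := fun (h : Ed d) (_ : 0 < ‖h‖ ∧ ‖h‖ < δ) =>
      ENNReal.ofReal (‖h‖ ^ (-β)) * tLp d p (fun x => g (x + h) - g x)) (-y) hc
    rw [norm_neg] at h2
    exact h2
  have hprod : ENNReal.ofReal (‖y‖ ^ β) * ENNReal.ofReal (‖y‖ ^ (-β)) = 1 := by
    rw [← ENNReal.ofReal_mul (by positivity), ← Real.rpow_add hy0, add_neg_cancel,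
      Real.rpow_zero, ENNReal.ofReal_one]
  have h3 : eLpNorm (fun x => g (x - y) - g x) p (torusMeasure d)
      = tLp d p (fun x => g (x + (-y)) - g x) := by rw [tLp, hfe]
  calc eLpNorm (fun x => g (x - y) - g x) p (torusMeasure d)
      = 1 * tLp d p (fun x => g (x + (-y)) - g x) := by rw [one_mul, h3]
    _ = ENNReal.ofReal (‖y‖ ^ β) *
        (ENNReal.ofReal (‖y‖ ^ (-β)) * tLp d p (fun x => g (x + (-y)) - g x)) := by
          rw [← mul_assoc, hprod]
    _ ≤ ENNReal.ofReal (‖y‖ ^ β) * Vnorm d β δ p g := mul_le_mul_right h1 _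

/-- Functions in `L^p` of the torus are in `L^1`. -/
lemma lint_cube_norm_lt_top {g : Ed d → ℝ} {p : ℝ≥0∞} (hp : 1 ≤ p) (hg : Measurable g)
    (hfin : tLp d p g < ⊤) : ∫⁻ x in unitCube d, ‖g x‖₊ ∂volume < ⊤ := by
  have h1 : ∫⁻ x in unitCube d, (‖g x‖₊ : ℝ≥0∞) ∂volume = eLpNorm g 1 (torusMeasure d) := by
    rw [eLpNorm_one_eq_lintegral_enorm]; rfl
  rw [h1]
  calc eLpNorm g 1 (torusMeasure d)
      ≤ eLpNorm g p (torusMeasure d) *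
        (torusMeasure d Set.univ) ^ (1/(1:ℝ≥0∞).toReal - 1/p.toReal) :=
        eLpNorm_le_eLpNorm_mul_rpow_measure_univ hp hg.aestronglyMeasurable
    _ = eLpNorm g p (torusMeasure d) := by rw [torus_univ, ENNReal.one_rpow, mul_one]
    _ < ⊤ := hfin

/-- Almost-every point of the torus gives an integrable mollification integrand. -/
lemma ae_integrable_kernel_mul {g : Ed d → ℝ} (hg : Measurable g) (hper : PeriodicF g)
    (hfin : ∫⁻ x in unitCube d, ‖g x‖₊ ∂volume < ⊤) {K : Ed d → ℝ} (hK : Measurable K)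
    (hK0 : ∀ y, 0 ≤ K y) (hK1 : ∫⁻ y, ENNReal.ofReal (K y) = 1) :
    ∀ᵐ x ∂(torusMeasure d), Integrable (fun y => K y * g (x - y)) volume := by
  set κ : Ed d → ℝ≥0∞ := fun y => ENNReal.ofReal (K y) with hκdef
  have hκ : Measurable κ := ENNReal.measurable_ofReal.comp hK
  have hgm : Measurable fun z : Ed d × Ed d => (‖g (z.1 - z.2)‖₊ : ℝ≥0∞) :=
    (hg.comp (measurable_fst.sub measurable_snd)).nnnorm.coe_nnreal_ennreal
  set H : Ed d → ℝ≥0∞ := fun x => ∫⁻ y, κ y * ‖g (x - y)‖₊ ∂volume with hHdef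
  have hHmeas : Measurable H := by
    apply Measurable.lintegral_prod_right (f := fun x y => κ y * (‖g (x - y)‖₊ : ℝ≥0∞))
    exact (hκ.comp measurable_snd).mul hgm
  have hHint : ∫⁻ x, H x ∂(torusMeasure d) < ⊤ := by
    have swap : ∫⁻ x, H x ∂(torusMeasure d)
        = ∫⁻ y, ∫⁻ x, κ y * ‖g (x - y)‖₊ ∂(torusMeasure d) ∂volume := by
      rw [hHdef]
      exact lintegral_lintegral_swap ((hκ.comp measurable_snd).mul hgm).aemeasurable
    rw [swap]
    have inner : ∀ y : Ed d, ∫⁻ x, κ y * ‖g (x - y)‖₊ ∂(torusMeasure d)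
        = κ y * ∫⁻ x in unitCube d, ‖g x‖₊ ∂volume := by
      intro y
      have hmy : Measurable fun x : Ed d => (‖g (x - y)‖₊ : ℝ≥0∞) :=
        (hg.comp (measurable_id.sub measurable_const)).nnnorm.coe_nnreal_ennreal
      rw [lintegral_const_mul _ hmy]
      congr 1
      have hGper : ∀ (x : Ed d) (k : Fin d → ℤ),
          ((‖g (x + intVec k)‖₊ : ℝ≥0∞)) = (‖g x‖₊ : ℝ≥0∞) := fun x k => by rw [hper x k]
      have h4 := lint_shift (fun x => (‖g x‖₊ : ℝ≥0∞)) hGper (-y)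
      have h5 : (fun x : Ed d => x + (-y)) = fun x : Ed d => x - y := by
        funext x; rw [sub_eq_add_neg]
      rw [torusMeasure]
      calc ∫⁻ x in unitCube d, ‖g (x - y)‖₊ ∂volume
          = ∫⁻ x in unitCube d, ‖g (x + (-y))‖₊ ∂volume := by
            refine lintegral_congr fun x => ?_
            rw [sub_eq_add_neg]
        _ = ∫⁻ x in unitCube d, ‖g x‖₊ ∂volume := h4
    calc ∫⁻ y, ∫⁻ x, κ y * ‖g (x - y)‖₊ ∂(torusMeasure d) ∂volume
        = ∫⁻ y, κ y * ∫⁻ x in unitCube d, ‖g x‖₊ ∂volume ∂volume :=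
          lintegral_congr inner
      _ = (∫⁻ y, κ y ∂volume) * ∫⁻ x in unitCube d, ‖g x‖₊ ∂volume :=
          lintegral_mul_const _ hκ
      _ < ⊤ := by rw [hK1, one_mul]; exact hfin
  have hae : ∀ᵐ x ∂(torusMeasure d), H x < ⊤ := ae_lt_top hHmeas hHint.ne
  filter_upwards [hae] with x hx
  refine ⟨((hK.mul (hg.comp (measurable_const.sub measurable_id))).aestronglyMeasurable), ?_⟩
  show ∫⁻ y, (‖K y * g (x - y)‖₊ : ℝ≥0∞) ∂volume < ⊤
  have h6 : ∫⁻ y, (‖K y * g (x - y)‖₊ : ℝ≥0∞) ∂volume = H x := by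
    simp only [hHdef]
    exact lintegral_congr fun y => by
      rw [nnnorm_mul, ENNReal.coe_mul, ← enorm_eq_nnnorm (K y), Real.enorm_eq_ofReal (hK0 y)]
  rw [h6]
  exact hx

/-- Lower bound for the norm of the mollifier. -/
lemma one_le_max_mul_eLpNorm {ω : Ed d → ℝ} (hmol : IsMollifier d ω) {p q : ℝ≥0∞}
    (hpq : p⁻¹ + q⁻¹ = 1) :
    1 ≤ ENNReal.ofReal (max 1 (volume (Metric.closedBall (0:Ed d) 1)).toReal) *
      eLpNorm ω q volume := by
  set B := (volume (Metric.closedBall (0:Ed d) 1)).toReal with hBdef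
  set v := volume (Metric.closedBall (0:Ed d) 1) with hvdef
  have hvne : v ≠ ⊤ := measure_closedBall_lt_top.ne
  have hωm : Measurable ω := hmol.smooth.continuous.measurable
  have hq1 : 1 ≤ q := by
    rw [← ENNReal.inv_le_one]
    calc q⁻¹ ≤ p⁻¹ + q⁻¹ := le_add_self
    _ = 1 := hpq
  set μB := volume.restrict (Metric.closedBall (0:Ed d) 1) with hμBdef
  haveI : IsFiniteMeasure μB := by
    constructor
    rw [hμBdef, Measure.restrict_apply_univ]
    exact measure_closedBall_lt_top
  have hωint : Integrable ω volume :=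
    hmol.smooth.continuous.integrable_of_hasCompactSupport
      (HasCompactSupport.of_support_subset_isCompact (isCompact_closedBall (0 : Ed d) 1)
        hmol.support_subset)
  have step1 : eLpNorm ω 1 μB = 1 := by
    rw [eLpNorm_one_eq_lintegral_enorm, hμBdef]
    have h2 : ∫⁻ y in Metric.closedBall (0:Ed d) 1, (‖ω y‖₊ : ℝ≥0∞) ∂volume
        = ∫⁻ y, ENNReal.ofReal (ω y) ∂volume := by
      rw [← lintegral_indicator measurableSet_closedBall]
      refine lintegral_congr fun y => ?_
      by_cases hy : y ∈ Metric.closedBall (0:Ed d) 1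
      · rw [Set.indicator_of_mem hy, ← enorm_eq_nnnorm, Real.enorm_eq_ofReal (hmol.nonneg y)]
      · have hω0 : ω y = 0 := by
          by_contra h0
          exact hy (hmol.support_subset h0)
        rw [Set.indicator_of_notMem hy, hω0, ENNReal.ofReal_zero]
    rw [show (∫⁻ x in Metric.closedBall (0:Ed d) 1, ‖ω x‖ₑ) = _ from h2, ← MeasureTheory.ofReal_integral_eq_lintegral_ofReal hωint
      (Filter.Eventually.of_forall hmol.nonneg), hmol.integral_one, ENNReal.ofReal_one]
  have step2 : (1:ℝ≥0∞) ≤ eLpNorm ω q μB * v ^ (1/(1:ℝ≥0∞).toReal - 1/q.toReal) := by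
    calc (1:ℝ≥0∞) = eLpNorm ω 1 μB := step1.symm
    _ ≤ eLpNorm ω q μB * (μB Set.univ) ^ (1/(1:ℝ≥0∞).toReal - 1/q.toReal) :=
        eLpNorm_le_eLpNorm_mul_rpow_measure_univ (p := 1) hq1
          (hωm.aestronglyMeasurable (μ := μB))
    _ = eLpNorm ω q μB * v ^ (1/(1:ℝ≥0∞).toReal - 1/q.toReal) := by
        rw [hμBdef, Measure.restrict_apply_univ]
  have hexp0 : 0 ≤ 1/(1:ℝ≥0∞).toReal - 1/q.toReal := by
    simp only [ENNReal.toReal_one]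
    have h1q : 1/q.toReal ≤ 1 := by
      rcases eq_or_ne q ⊤ with hq | hq
      · simp [hq]
      · have : 1 ≤ q.toReal := by
          have := ENNReal.toReal_mono hq hq1
          simpa using this
        rw [div_le_one (by linarith)]
        linarith
    linarith
  have hexp1 : 1/(1:ℝ≥0∞).toReal - 1/q.toReal ≤ 1 := by
    simp only [ENNReal.toReal_one]
    have : 0 ≤ 1/q.toReal := by positivity
    linarith
  have step3 : v ^ (1/(1:ℝ≥0∞).toReal - 1/q.toReal) ≤ ENNReal.ofReal (max 1 B) := by
    rcases le_total v 1 with hv | hv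
    · calc v ^ (1/(1:ℝ≥0∞).toReal - 1/q.toReal) ≤ 1 := ENNReal.rpow_le_one hv hexp0
      _ ≤ ENNReal.ofReal (max 1 B) := ENNReal.one_le_ofReal.mpr (le_max_left _ _)
    · calc v ^ (1/(1:ℝ≥0∞).toReal - 1/q.toReal) ≤ v ^ (1:ℝ) :=
          ENNReal.rpow_le_rpow_of_exponent_le hv hexp1
      _ = v := ENNReal.rpow_one v
      _ = ENNReal.ofReal B := by rw [hBdef, hvdef, ENNReal.ofReal_toReal hvne]
      _ ≤ ENNReal.ofReal (max 1 B) := ENNReal.ofReal_le_ofReal (le_max_right _ _)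
  calc (1:ℝ≥0∞) ≤ eLpNorm ω q μB * v ^ (1/(1:ℝ≥0∞).toReal - 1/q.toReal) := step2
    _ ≤ eLpNorm ω q volume * ENNReal.ofReal (max 1 B) :=
        mul_le_mul' (eLpNorm_mono_measure ω Measure.restrict_le_self) step3
    _ = ENNReal.ofReal (max 1 B) * eLpNorm ω q volume := mul_comm _ _

end Stage5

end Aux

/-- commutator estimate for mollification on the torus. -/
theorem mollification_commutator_estimate_torus (d : ℕ) (hd : 1 ≤ d) :
    ∃ C : ℝ, 0 < C ∧
      ∀ (β₁ β₂ : ℝ), β₁ ∈ Set.Ioo (0:ℝ) 1 → β₂ ∈ Set.Ioo (0:ℝ) 1 →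
      ∀ (p p₁ p₂ q : ℝ≥0∞), 1 ≤ p → 1 ≤ p₁ → 1 ≤ p₂ → p⁻¹ = p₁⁻¹ + p₂⁻¹ → p⁻¹ + q⁻¹ = 1 →
      ∀ ω : Ed d → ℝ, IsMollifier d ω →
      ∀ g₁ g₂ : Ed d → ℝ, Measurable g₁ → Measurable g₂ → PeriodicF g₁ → PeriodicF g₂ →
        tLp d p₁ g₁ < ⊤ → tLp d p₂ g₂ < ⊤ →
      ∀ ε δ : ℝ, 0 < ε → ε ≤ δ →
        tLp d p (fun x => moll d ω ε (fun y => g₁ y * g₂ y) x - moll d ω ε g₁ x * moll d ω ε g₂ x)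
          ≤ ENNReal.ofReal (C * ε ^ (β₁ + β₂)) * eLpNorm ω q (volume : Measure (Ed d)) *
              Vnorm d β₁ δ p₁ g₁ * Vnorm d β₂ δ p₂ g₂ := by
  classical
  set B : ℝ := (volume (Metric.closedBall (0:Ed d) 1)).toReal with hBdef
  refine ⟨2 * max 1 B, by positivity, ?_⟩
  intro β₁ β₂ hβ₁ hβ₂ p p₁ p₂ q hp hp₁ hp₂ hppp hpq ω hmol g₁ g₂ hg₁ hg₂ hper₁ hper₂
    hfin₁ hfin₂ ε δ hε hεδ
  haveI : Nonempty (Fin d) := ⟨⟨0, hd⟩⟩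
  haveI : Nontrivial (Ed d) :=
    ⟨⟨EuclideanSpace.single ⟨0, hd⟩ 1, 0, fun h => one_ne_zero (α := ℝ)
      (by simpa using congrArg (· ⟨0, hd⟩) h)⟩⟩
  set μ := torusMeasure d with hμdef
  haveI : IsFiniteMeasure μ := ⟨by rw [hμdef, torus_univ]; exact ENNReal.one_lt_top⟩
  set K := mollKer d ω ε with hKdef
  have hK : Measurable K := (mollKer_cont hmol).measurable
  have hK0 : ∀ y, 0 ≤ K y := mollKer_nonneg hmol hε
  have hK1 : ∫⁻ y, ENNReal.ofReal (K y) ∂volume = 1 := mollKer_lintegral hmol hε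
  have hKint : Integrable K volume := mollKer_integrable hmol hε
  have hKir : ∫ y, K y ∂volume = 1 := mollKer_integral hmol hε
  set φ₁ : Ed d → Ed d → ℝ := fun x y => g₁ (x - y) - g₁ x with hφ₁def
  set φ₂ : Ed d → Ed d → ℝ := fun x y => g₂ (x - y) - g₂ x with hφ₂def
  set V₁ := Vnorm d β₁ δ p₁ g₁ with hV₁def
  set V₂ := Vnorm d β₂ δ p₂ g₂ with hV₂def
  set M₁ := ENNReal.ofReal (ε ^ β₁) * V₁ with hM₁def
  set M₂ := ENNReal.ofReal (ε ^ β₂) * V₂ with hM₂def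
  -- measurability helpers
  have hφ₁m : Measurable fun z : Ed d × Ed d => φ₁ z.1 z.2 :=
    (hg₁.comp (measurable_fst.sub measurable_snd)).sub (hg₁.comp measurable_fst)
  have hφ₂m : Measurable fun z : Ed d × Ed d => φ₂ z.1 z.2 :=
    (hg₂.comp (measurable_fst.sub measurable_snd)).sub (hg₂.comp measurable_fst)
  have hφ₁₂m : Measurable fun z : Ed d × Ed d => φ₁ z.1 z.2 * φ₂ z.1 z.2 := hφ₁m.mul hφ₂m
  have hφ₁y : ∀ y, Measurable fun x => φ₁ x y := fun y => hφ₁m.comp measurable_prodMk_right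
  have hφ₂y : ∀ y, Measurable fun x => φ₂ x y := fun y => hφ₂m.comp measurable_prodMk_right
  set U₁ : Ed d → ℝ := fun x => ∫ y, K y * φ₁ x y ∂volume with hU₁def
  set U₂ : Ed d → ℝ := fun x => ∫ y, K y * φ₂ x y ∂volume with hU₂def
  set T1 : Ed d → ℝ := fun x => ∫ y, K y * (φ₁ x y * φ₂ x y) ∂volume with hT1def
  have hU₁m : AEStronglyMeasurable U₁ μ := by
    have := ((hK.comp measurable_snd).mul hφ₁m).stronglyMeasurable.integral_prod_right'
      (ν := (volume : Measure (Ed d)))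
    exact this.aestronglyMeasurable
  have hU₂m : AEStronglyMeasurable U₂ μ := by
    have := ((hK.comp measurable_snd).mul hφ₂m).stronglyMeasurable.integral_prod_right'
      (ν := (volume : Measure (Ed d)))
    exact this.aestronglyMeasurable
  have hT1m : AEStronglyMeasurable T1 μ := by
    have := ((hK.comp measurable_snd).mul hφ₁₂m).stronglyMeasurable.integral_prod_right'
      (ν := (volume : Measure (Ed d)))
    exact this.aestronglyMeasurable
  -- a.e. integrability
  have hg₁fin : ∫⁻ x in unitCube d, ‖g₁ x‖₊ ∂volume < ⊤ := lint_cube_norm_lt_top hp₁ hg₁ hfin₁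
  have hg₂fin : ∫⁻ x in unitCube d, ‖g₂ x‖₊ ∂volume < ⊤ := lint_cube_norm_lt_top hp₂ hg₂ hfin₂
  have h12meas : Measurable fun t => g₁ t * g₂ t := hg₁.mul hg₂
  have h12per : PeriodicF fun t => g₁ t * g₂ t := by
    intro x k
    simp only [hper₁ x k, hper₂ x k]
  have h1p : 1/p = 1/p₁ + 1/p₂ := by rw [one_div, one_div, one_div]; exact hppp
  haveI : ENNReal.HolderTriple p₁ p₂ p := ⟨hppp.symm⟩
  have h12fin : tLp d p (fun t => g₁ t * g₂ t) < ⊤ := by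
    have hH : eLpNorm (fun t => g₁ t * g₂ t) p μ ≤ eLpNorm g₁ p₁ μ * eLpNorm g₂ p₂ μ := by
      have := eLpNorm_smul_le_mul_eLpNorm (μ := μ) (p := p₁) (q := p₂) (r := p)
        hg₂.aestronglyMeasurable hg₁.aestronglyMeasurable
      exact this
    exact lt_of_le_of_lt hH (ENNReal.mul_lt_top hfin₁ hfin₂)
  have h12fin' : ∫⁻ x in unitCube d, ‖g₁ x * g₂ x‖₊ ∂volume < ⊤ :=
    lint_cube_norm_lt_top hp h12meas h12fin
  have hae₁ : ∀ᵐ x ∂μ, Integrable (fun y => K y * g₁ (x - y)) volume :=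
    ae_integrable_kernel_mul hg₁ hper₁ hg₁fin hK hK0 hK1
  have hae₂ : ∀ᵐ x ∂μ, Integrable (fun y => K y * g₂ (x - y)) volume :=
    ae_integrable_kernel_mul hg₂ hper₂ hg₂fin hK hK0 hK1
  have hae₁₂ : ∀ᵐ x ∂μ, Integrable (fun y => K y * (g₁ (x - y) * g₂ (x - y))) volume :=
    ae_integrable_kernel_mul h12meas h12per h12fin' hK hK0 hK1
  -- the pointwise identity
  have hid : (fun x => moll d ω ε (fun y => g₁ y * g₂ y) x -
      moll d ω ε g₁ x * moll d ω ε g₂ x) =ᵐ[μ] fun x => T1 x - U₁ x * U₂ x := by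
    filter_upwards [hae₁, hae₂, hae₁₂] with x I1 I2 I12
    have hm1 : moll d ω ε g₁ x = ∫ y, K y * g₁ (x - y) ∂volume := by
      simp only [moll, smul_eq_mul, hKdef]
    have hm2 : moll d ω ε g₂ x = ∫ y, K y * g₂ (x - y) ∂volume := by
      simp only [moll, smul_eq_mul, hKdef]
    have hm12 : moll d ω ε (fun y => g₁ y * g₂ y) x
        = ∫ y, K y * (g₁ (x - y) * g₂ (x - y)) ∂volume := by
      simp only [moll, smul_eq_mul, hKdef]
    have e₁ : U₁ x = moll d ω ε g₁ x - g₁ x := by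
      rw [hU₁def]
      simp only
      calc ∫ y, K y * φ₁ x y ∂volume
          = ∫ y, (K y * g₁ (x - y) - K y * g₁ x) ∂volume := by
            refine integral_congr_ae (Filter.Eventually.of_forall fun y => ?_)
            rw [hφ₁def]; ring
        _ = (∫ y, K y * g₁ (x - y) ∂volume) - ∫ y, K y * g₁ x ∂volume :=
            integral_sub I1 (hKint.mul_const _)
        _ = moll d ω ε g₁ x - g₁ x := by
            rw [hm1, integral_mul_const, hKir, one_mul]
    have e₂ : U₂ x = moll d ω ε g₂ x - g₂ x := by
      rw [hU₂def]
      simp only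
      calc ∫ y, K y * φ₂ x y ∂volume
          = ∫ y, (K y * g₂ (x - y) - K y * g₂ x) ∂volume := by
            refine integral_congr_ae (Filter.Eventually.of_forall fun y => ?_)
            rw [hφ₂def]; ring
        _ = (∫ y, K y * g₂ (x - y) ∂volume) - ∫ y, K y * g₂ x ∂volume :=
            integral_sub I2 (hKint.mul_const _)
        _ = moll d ω ε g₂ x - g₂ x := by
            rw [hm2, integral_mul_const, hKir, one_mul]
    have e₁₂ : T1 x = moll d ω ε (fun y => g₁ y * g₂ y) x
        - g₂ x * moll d ω ε g₁ x - g₁ x * moll d ω ε g₂ x + g₁ x * g₂ x := by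
      rw [hT1def]
      simp only
      have hA : Integrable (fun y => K y * (g₁ (x - y) * g₂ (x - y))) volume := I12
      have hB : Integrable (fun y => g₂ x * (K y * g₁ (x - y))) volume := I1.const_mul _
      have hC : Integrable (fun y => g₁ x * (K y * g₂ (x - y))) volume := I2.const_mul _
      have hD : Integrable (fun y => (g₁ x * g₂ x) * K y) volume := hKint.const_mul _
      have hAB : Integrable (fun y => K y * (g₁ (x - y) * g₂ (x - y))
          - g₂ x * (K y * g₁ (x - y))) volume := hA.sub hB
      have hABC : Integrable (fun y => K y * (g₁ (x - y) * g₂ (x - y))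
          - g₂ x * (K y * g₁ (x - y)) - g₁ x * (K y * g₂ (x - y))) volume := hAB.sub hC
      calc ∫ y, K y * (φ₁ x y * φ₂ x y) ∂volume
          = ∫ y, (K y * (g₁ (x - y) * g₂ (x - y)) - g₂ x * (K y * g₁ (x - y))
              - g₁ x * (K y * g₂ (x - y)) + (g₁ x * g₂ x) * K y) ∂volume := by
            refine integral_congr_ae (Filter.Eventually.of_forall fun y => ?_)
            rw [hφ₁def, hφ₂def]; ring
        _ = (∫ y, (K y * (g₁ (x - y) * g₂ (x - y)) - g₂ x * (K y * g₁ (x - y))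
              - g₁ x * (K y * g₂ (x - y))) ∂volume) + ∫ y, (g₁ x * g₂ x) * K y ∂volume :=
            integral_add hABC hD
        _ = (∫ y, (K y * (g₁ (x - y) * g₂ (x - y)) - g₂ x * (K y * g₁ (x - y))) ∂volume)
              - (∫ y, g₁ x * (K y * g₂ (x - y)) ∂volume) + ∫ y, (g₁ x * g₂ x) * K y ∂volume := by
            rw [integral_sub hAB hC]
        _ = (∫ y, K y * (g₁ (x - y) * g₂ (x - y)) ∂volume)
              - (∫ y, g₂ x * (K y * g₁ (x - y)) ∂volume)
              - (∫ y, g₁ x * (K y * g₂ (x - y)) ∂volume)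
              + ∫ y, (g₁ x * g₂ x) * K y ∂volume := by
            rw [integral_sub hA hB]
        _ = moll d ω ε (fun y => g₁ y * g₂ y) x - g₂ x * moll d ω ε g₁ x
              - g₁ x * moll d ω ε g₂ x + g₁ x * g₂ x := by
            rw [integral_const_mul, integral_const_mul, integral_const_mul, hm12, ← hm1, ← hm2,
              hKir, mul_one]
    rw [e₁, e₂, e₁₂]
    ring
  -- the main estimates
  have hNae : ∀ᵐ y ∂(volume : Measure (Ed d)),
      y ∉ ({0} ∪ Metric.sphere (0:Ed d) ε : Set (Ed d)) := by
    have h0 : volume ({0} : Set (Ed d)) = 0 := by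
      have : ({0} : Set (Ed d)) = Metric.sphere (0:Ed d) 0 := by
        ext z; simp [Metric.mem_sphere, dist_eq_zero]
      rw [this]
      exact Measure.addHaar_sphere volume 0 0
    have hsph : volume (Metric.sphere (0:Ed d) ε) = 0 := Measure.addHaar_sphere volume 0 ε
    have := measure_union_null h0 hsph
    exact measure_eq_zero_iff_ae_notMem.mp this
  have good_y : ∀ y : Ed d, y ∉ ({0} ∪ Metric.sphere (0:Ed d) ε : Set (Ed d)) → K y ≠ 0 →
      0 < ‖y‖ ∧ ‖y‖ < δ := by
    intro y hyN hKy
    have hyε : ‖y‖ ≤ ε := mollKer_support hmol hε hKy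
    have hy0 : y ≠ 0 := fun h => hyN (Or.inl (by simp [h]))
    have hyne : ‖y‖ ≠ ε := by
      intro h
      exact hyN (Or.inr (by simp [Metric.mem_sphere, dist_zero_right, h]))
    exact ⟨norm_pos_iff.mpr hy0, lt_of_lt_of_le (lt_of_le_of_ne hyε hyne) hεδ⟩
  have hbd₁ : ∀ᵐ y ∂(volume : Measure (Ed d)), K y ≠ 0 →
      eLpNorm (fun x => φ₁ x y) p₁ μ ≤ M₁ := by
    filter_upwards [hNae] with y hyN hKy
    obtain ⟨hy0, hyδ⟩ := good_y y hyN hKy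
    have hyε : ‖y‖ ≤ ε := mollKer_support hmol hε hKy
    calc eLpNorm (fun x => φ₁ x y) p₁ μ
        = eLpNorm (fun x => g₁ (x - y) - g₁ x) p₁ (torusMeasure d) := rfl
      _ ≤ ENNReal.ofReal (‖y‖ ^ β₁) * V₁ := tLp_sub_shift_le hβ₁.1.le hy0 hyδ
      _ ≤ M₁ := by
          rw [hM₁def]
          exact mul_le_mul_left (ENNReal.ofReal_le_ofReal
            (Real.rpow_le_rpow (norm_nonneg y) hyε hβ₁.1.le)) V₁
  have hbd₂ : ∀ᵐ y ∂(volume : Measure (Ed d)), K y ≠ 0 →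
      eLpNorm (fun x => φ₂ x y) p₂ μ ≤ M₂ := by
    filter_upwards [hNae] with y hyN hKy
    obtain ⟨hy0, hyδ⟩ := good_y y hyN hKy
    have hyε : ‖y‖ ≤ ε := mollKer_support hmol hε hKy
    calc eLpNorm (fun x => φ₂ x y) p₂ μ
        = eLpNorm (fun x => g₂ (x - y) - g₂ x) p₂ (torusMeasure d) := rfl
      _ ≤ ENNReal.ofReal (‖y‖ ^ β₂) * V₂ := tLp_sub_shift_le hβ₂.1.le hy0 hyδ
      _ ≤ M₂ := by
          rw [hM₂def]
          exact mul_le_mul_left (ENNReal.ofReal_le_ofReal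
            (Real.rpow_le_rpow (norm_nonneg y) hyε hβ₂.1.le)) V₂
  have hbd₁₂ : ∀ᵐ y ∂(volume : Measure (Ed d)), K y ≠ 0 →
      eLpNorm (fun x => φ₁ x y * φ₂ x y) p μ ≤ M₁ * M₂ := by
    filter_upwards [hbd₁, hbd₂] with y h1 h2 hKy
    have hHo : eLpNorm (fun x => φ₁ x y * φ₂ x y) p μ
        ≤ eLpNorm (fun x => φ₁ x y) p₁ μ * eLpNorm (fun x => φ₂ x y) p₂ μ := by
      have := eLpNorm_smul_le_mul_eLpNorm (μ := μ) (p := p₁) (q := p₂) (r := p)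
        (hφ₂y y).aestronglyMeasurable (hφ₁y y).aestronglyMeasurable
      exact this
    exact le_trans hHo (mul_le_mul' (h1 hKy) (h2 hKy))
  have hT1 : eLpNorm T1 p μ ≤ M₁ * M₂ :=
    eLpNorm_kernel_bound μ volume hp hK hK0 hK1 hφ₁₂m hbd₁₂
  have hU₁ : eLpNorm U₁ p₁ μ ≤ M₁ :=
    eLpNorm_kernel_bound μ volume hp₁ hK hK0 hK1 hφ₁m hbd₁
  have hU₂ : eLpNorm U₂ p₂ μ ≤ M₂ :=
    eLpNorm_kernel_bound μ volume hp₂ hK hK0 hK1 hφ₂m hbd₂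
  have hT2 : eLpNorm (fun x => U₁ x * U₂ x) p μ ≤ M₁ * M₂ := by
    have hHo : eLpNorm (fun x => U₁ x * U₂ x) p μ ≤ eLpNorm U₁ p₁ μ * eLpNorm U₂ p₂ μ := by
      have := eLpNorm_smul_le_mul_eLpNorm (μ := μ) (p := p₁) (q := p₂) (r := p)
        hU₂m hU₁m
      exact this
    exact le_trans hHo (mul_le_mul' hU₁ hU₂)
  -- put everything together
  have main : tLp d p (fun x => moll d ω ε (fun y => g₁ y * g₂ y) x -
      moll d ω ε g₁ x * moll d ω ε g₂ x) ≤ M₁ * M₂ + M₁ * M₂ := by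
    rw [tLp, ← hμdef, eLpNorm_congr_ae hid]
    calc eLpNorm (fun x => T1 x - U₁ x * U₂ x) p μ
        ≤ eLpNorm T1 p μ + eLpNorm (fun x => U₁ x * U₂ x) p μ :=
          eLpNorm_sub_le hT1m (hU₁m.mul hU₂m) hp
      _ ≤ M₁ * M₂ + M₁ * M₂ := add_le_add hT1 hT2
  refine le_trans main ?_
  -- the numerical endgame
  have hω1 : 1 ≤ ENNReal.ofReal (max 1 B) * eLpNorm ω q volume :=
    one_le_max_mul_eLpNorm hmol hpq
  have hMM : M₁ * M₂ = ENNReal.ofReal (ε ^ (β₁ + β₂)) * (V₁ * V₂) := by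
    rw [hM₁def, hM₂def, mul_mul_mul_comm, ← ENNReal.ofReal_mul (by positivity),
      ← Real.rpow_add hε]
  have hnum : (ENNReal.ofReal (ε ^ (β₁ + β₂)) + ENNReal.ofReal (ε ^ (β₁ + β₂)))
      ≤ ENNReal.ofReal ((2 * max 1 B) * ε ^ (β₁ + β₂)) * eLpNorm ω q volume := by
    calc ENNReal.ofReal (ε ^ (β₁ + β₂)) + ENNReal.ofReal (ε ^ (β₁ + β₂))
        = ENNReal.ofReal (2 * ε ^ (β₁ + β₂)) := by
          rw [two_mul, ENNReal.ofReal_add (by positivity) (by positivity)]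
      _ = ENNReal.ofReal (2 * ε ^ (β₁ + β₂)) * 1 := (mul_one _).symm
      _ ≤ ENNReal.ofReal (2 * ε ^ (β₁ + β₂)) *
          (ENNReal.ofReal (max 1 B) * eLpNorm ω q volume) := mul_le_mul_right hω1 _
      _ = (ENNReal.ofReal (2 * ε ^ (β₁ + β₂)) * ENNReal.ofReal (max 1 B)) *
          eLpNorm ω q volume := (mul_assoc _ _ _).symm
      _ = ENNReal.ofReal ((2 * max 1 B) * ε ^ (β₁ + β₂)) * eLpNorm ω q volume := by
          rw [← ENNReal.ofReal_mul (by positivity)]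
          congr 2
          ring
  calc M₁ * M₂ + M₁ * M₂
      = (ENNReal.ofReal (ε ^ (β₁ + β₂)) + ENNReal.ofReal (ε ^ (β₁ + β₂))) * (V₁ * V₂) := by
        rw [hMM, add_mul]
    _ ≤ (ENNReal.ofReal ((2 * max 1 B) * ε ^ (β₁ + β₂)) * eLpNorm ω q volume) * (V₁ * V₂) :=
        mul_le_mul_left hnum _
    _ = ENNReal.ofReal ((2 * max 1 B) * ε ^ (β₁ + β₂)) * eLpNorm ω q volume * V₁ * V₂ := by
        rw [mul_assoc (ENNReal.ofReal _ * eLpNorm ω q volume) V₁ V₂]
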